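/- Under conditions (i) and (ii) of the preceding setting, E[(‖E‖/√(Tm))⁴] ≤ (S + B)/min(T, m); consequently, by Markov's inequality, for every ε > 0, P(‖E‖/√(Tm) ≥ ε / min(T,m)^{1/4}) ≤ (S+B)/ε⁴. -/

import Mathlib

open MeasureTheory Matrix
open scoped Matrix

/-- Spectral (operator) norm of a real matrix, induced by Euclidean norms. -/
noncomputable def specNorm {T m : ℕ} (A : Matrix (Fin T) (Fin m) ℝ) : ℝ :=
  ‖(Matrix.toEuclideanLin A).toContinuousLinearMap‖

/-- Covariance of two real random variables: Cov(X,Y) = E[XY] − E[X]E[Y]. -/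
noncomputable def cov {Ω : Type*} [MeasurableSpace Ω] (μ : Measure Ω) (X Y : Ω → ℝ) : ℝ :=
  (∫ ω, X ω * Y ω ∂μ) - (∫ ω, X ω ∂μ) * (∫ ω, Y ω ∂μ)


lemma specNorm_pow_four_le {T m : ℕ} (A : Matrix (Fin T) (Fin m) ℝ) :
    specNorm A ^ 4 ≤ ∑ t : Fin T, ∑ s : Fin T, (∑ i : Fin m, A t i * A s i) ^ 2 := by
  classical
  set F : ℝ := ∑ t : Fin T, ∑ s : Fin T, (∑ i : Fin m, A t i * A s i) ^ 2 with hFdef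
  have hF0 : 0 ≤ F := Finset.sum_nonneg fun _ _ => Finset.sum_nonneg fun _ _ => sq_nonneg _
  set M : Fin m → Fin m → ℝ := fun i j => ∑ t : Fin T, A t i * A t j with hMdef
  -- sum of squares of M equals F
  have swap4 : ∀ (f : Fin m → Fin m → Fin T → Fin T → ℝ),
      ∑ i : Fin m, ∑ j : Fin m, ∑ t : Fin T, ∑ s : Fin T, f i j t s
        = ∑ t : Fin T, ∑ s : Fin T, ∑ i : Fin m, ∑ j : Fin m, f i j t s := by
    intro f
    trans ∑ i : Fin m, ∑ t : Fin T, ∑ j : Fin m, ∑ s : Fin T, f i j t s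
    · exact Finset.sum_congr rfl fun i _ => Finset.sum_comm ..
    trans ∑ t : Fin T, ∑ i : Fin m, ∑ j : Fin m, ∑ s : Fin T, f i j t s
    · exact Finset.sum_comm ..
    trans ∑ t : Fin T, ∑ i : Fin m, ∑ s : Fin T, ∑ j : Fin m, f i j t s
    · exact Finset.sum_congr rfl fun t _ => Finset.sum_congr rfl fun i _ =>
        Finset.sum_comm ..
    exact Finset.sum_congr rfl fun t _ => Finset.sum_comm ..
  have hMF : ∑ i : Fin m, ∑ j : Fin m, (M i j) ^ 2 = F := by
    simp only [hMdef, hFdef, pow_two, Finset.sum_mul, Finset.mul_sum]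
    rw [swap4 fun i j s t => A t i * A t j * (A s i * A s j)]
    refine Finset.sum_congr rfl fun a _ => Finset.sum_congr rfl fun b _ =>
      Finset.sum_congr rfl fun i _ => Finset.sum_congr rfl fun j _ => by ring
  -- key pointwise bound
  have hkey : ∀ x : EuclideanSpace ℝ (Fin m),
      ‖(Matrix.toEuclideanLin A).toContinuousLinearMap x‖ ≤ Real.sqrt (Real.sqrt F) * ‖x‖ := by
    intro x
    have hnx : ‖x‖ ^ 2 = ∑ i : Fin m, (x i) ^ 2 := by
      rw [EuclideanSpace.norm_eq, Real.sq_sqrt (Finset.sum_nonneg fun _ _ => sq_nonneg _)]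
      simp [sq_abs]
    set P : ℝ := ∑ i : Fin m, (x i) ^ 2 with hPdef
    have hP0 : 0 ≤ P := Finset.sum_nonneg fun _ _ => sq_nonneg _
    have happly : ∀ t : Fin T, (Matrix.toEuclideanLin A).toContinuousLinearMap x t
        = ∑ i : Fin m, A t i * x i := by
      intro t
      simp [Matrix.toEuclideanLin_apply, Matrix.mulVec, dotProduct]
    have hnorm : ‖(Matrix.toEuclideanLin A).toContinuousLinearMap x‖ ^ 2
        = ∑ t : Fin T, (∑ i : Fin m, A t i * x i) ^ 2 := by
      rw [EuclideanSpace.norm_eq, Real.sq_sqrt (Finset.sum_nonneg fun _ _ => sq_nonneg _)]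
      exact Finset.sum_congr rfl fun t _ => by rw [Real.norm_eq_abs, sq_abs, happly]
    set Q : ℝ := ∑ t : Fin T, (∑ i : Fin m, A t i * x i) ^ 2 with hQdef
    have hQ0 : 0 ≤ Q := Finset.sum_nonneg fun _ _ => sq_nonneg _
    -- Q = x ⬝ M x
    have hQM : Q = ∑ i : Fin m, x i * (∑ j : Fin m, M i j * x j) := by
      simp only [hQdef, hMdef, pow_two, Finset.sum_mul_sum, Finset.sum_mul, Finset.mul_sum]
      rw [Finset.sum_comm]
      refine Finset.sum_congr rfl fun i _ => ?_
      rw [Finset.sum_comm]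
      exact Finset.sum_congr rfl fun j _ => Finset.sum_congr rfl fun t _ => by ring
    -- Q² ≤ P * Σ (Mx)² ≤ P * (F * P)
    have h1 : Q ^ 2 ≤ P * ∑ i : Fin m, (∑ j : Fin m, M i j * x j) ^ 2 := by
      rw [hQM]; exact Finset.sum_mul_sq_le_sq_mul_sq _ _ _
    have h2 : ∑ i : Fin m, (∑ j : Fin m, M i j * x j) ^ 2 ≤ F * P := by
      calc ∑ i : Fin m, (∑ j : Fin m, M i j * x j) ^ 2
          ≤ ∑ i : Fin m, (∑ j : Fin m, (M i j) ^ 2) * P := by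
            refine Finset.sum_le_sum fun i _ => ?_
            exact Finset.sum_mul_sq_le_sq_mul_sq _ _ _
        _ = F * P := by rw [← Finset.sum_mul, hMF]
    have hQF : Q ^ 2 ≤ F * P ^ 2 := by
      calc Q ^ 2 ≤ P * (F * P) := h1.trans (by
            exact mul_le_mul_of_nonneg_left h2 hP0)
        _ = F * P ^ 2 := by ring
    have hQle : Q ≤ Real.sqrt F * P := by
      have := Real.sqrt_le_sqrt hQF
      rwa [Real.sqrt_sq hQ0, Real.sqrt_mul hF0, Real.sqrt_sq hP0] at this
    -- conclude
    have hsq : ‖(Matrix.toEuclideanLin A).toContinuousLinearMap x‖ ^ 2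
        ≤ (Real.sqrt (Real.sqrt F) * ‖x‖) ^ 2 := by
      rw [hnorm, mul_pow, Real.sq_sqrt (Real.sqrt_nonneg F), hnx]
      exact hQle
    have h := Real.sqrt_le_sqrt hsq
    rwa [Real.sqrt_sq (norm_nonneg _),
      Real.sqrt_sq (mul_nonneg (Real.sqrt_nonneg _) (norm_nonneg _))] at h
  have hop : specNorm A ≤ Real.sqrt (Real.sqrt F) :=
    ContinuousLinearMap.opNorm_le_bound _ (Real.sqrt_nonneg _) hkey
  calc specNorm A ^ 4 ≤ Real.sqrt (Real.sqrt F) ^ 4 := by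
        refine pow_le_pow_left₀ ?_ hop 4
        exact norm_nonneg _
    _ = F := by
        have : Real.sqrt (Real.sqrt F) ^ 4 = (Real.sqrt (Real.sqrt F) ^ 2) ^ 2 := by ring
        rw [this, Real.sq_sqrt (Real.sqrt_nonneg F), Real.sq_sqrt hF0]

lemma specNorm_continuous {T m : ℕ} :
    Continuous (fun f : Fin T → Fin m → ℝ => specNorm (Matrix.of f)) := by
  let Φ : (Fin T → Fin m → ℝ) →ₗ[ℝ]
      (EuclideanSpace ℝ (Fin m) →L[ℝ] EuclideanSpace ℝ (Fin T)) :=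
    { toFun := fun f => (Matrix.toEuclideanLin (Matrix.of f)).toContinuousLinearMap
      map_add' := by
        intro f g
        show (Matrix.toEuclideanLin
          ((Matrix.of f : Matrix (Fin T) (Fin m) ℝ) + Matrix.of g)).toContinuousLinearMap = _
        rw [_root_.map_add, _root_.map_add]
      map_smul' := by
        intro c f
        show (Matrix.toEuclideanLin
          (c • (Matrix.of f : Matrix (Fin T) (Fin m) ℝ))).toContinuousLinearMap = _
        rw [_root_.map_smul, _root_.map_smul]
        rfl }
  have hΦ : Continuous Φ := Φ.continuous_of_finiteDimensional
  exact continuous_norm.comp hΦ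

/-- Lemma 1 of the paper, expectation form: under second-order stationarity, mean zero,
the autocovariance summability bound S and the fourth-cumulant bound B, the matrix E with
rows e_tᵀ satisfies E[(‖E‖/√(Tm))⁴] ≤ (S+B)/min(T,m), and by Markov's inequality,
P(‖E‖/√(Tm) ≥ ε·min(T,m)^{-1/4}) ≤ (S+B)/ε⁴ for every ε > 0. -/
theorem stmt8 {Ω : Type*} [MeasurableSpace Ω] (μ : Measure Ω) [IsProbabilityMeasure μ]
    {m : ℕ} (hm : 0 < m) (T : ℕ) (hT : 0 < T) (e : ℤ → Fin m → Ω → ℝ)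
    (hmeas : ∀ t i, Measurable (e t i))
    (hint4 : ∀ t s : ℤ, ∀ i j : Fin m,
      Integrable (fun ω => e t i ω * e s i ω * (e t j ω * e s j ω)) μ)
    (hint2 : ∀ t s : ℤ, ∀ i : Fin m, Integrable (fun ω => e t i ω * e s i ω) μ)
    (hmean : ∀ t : ℤ, ∀ i : Fin m, (∫ ω, e t i ω ∂μ) = 0)
    (hstat : ∀ t u : ℤ, (∫ ω, ∑ i : Fin m, e t i ω * e (t + u) i ω ∂μ) =
      ∫ ω, ∑ i : Fin m, e 1 i ω * e (1 + u) i ω ∂μ)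
    (S B : ℝ)
    (hsum : Summable (fun u : ℤ =>
      ((∫ ω, ∑ i : Fin m, e 1 i ω * e (1 + u) i ω ∂μ) / m) ^ 2))
    (hS : (∑' u : ℤ, ((∫ ω, ∑ i : Fin m, e 1 i ω * e (1 + u) i ω ∂μ) / m) ^ 2) ≤ S)
    (hB : ∀ t s : ℤ, (1 / (m : ℝ)) * ∑ i : Fin m, ∑ j : Fin m,
      |cov μ (fun ω => e t i ω * e s i ω) (fun ω => e t j ω * e s j ω)| ≤ B) :
    (∫ ω, (specNorm (Matrix.of fun (t : Fin T) (j : Fin m) => e ((t : ℕ) + 1) j ω) /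
        Real.sqrt ((T : ℝ) * m)) ^ 4 ∂μ) ≤ (S + B) / (min (T : ℝ) m) ∧
    ∀ ε : ℝ, 0 < ε →
      μ {ω | ε / (min (T : ℝ) m) ^ ((1 : ℝ) / 4) ≤
          specNorm (Matrix.of fun (t : Fin T) (j : Fin m) => e ((t : ℕ) + 1) j ω) /
            Real.sqrt ((T : ℝ) * m)} ≤ ENNReal.ofReal ((S + B) / ε ^ 4) := by
  classical
  have hm' : (0:ℝ) < m := by exact_mod_cast hm
  have hT' : (0:ℝ) < T := by exact_mod_cast hT
  have hmin : (0:ℝ) < min (T:ℝ) m := lt_min hT' hm'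
  set γ : ℤ → ℝ := fun u => ∫ ω, ∑ i : Fin m, e 1 i ω * e (1 + u) i ω ∂μ with hγ
  have hB0 : 0 ≤ B := le_trans (by positivity) (hB 0 0)
  have hS0 : 0 ≤ S := le_trans (tsum_nonneg fun u => sq_nonneg _) hS
  -- expansion of the square of the inner product
  have hexpand : ∀ t s : ℤ, ∀ ω : Ω, (∑ i : Fin m, e t i ω * e s i ω) ^ 2
      = ∑ i : Fin m, ∑ j : Fin m, (e t i ω * e s i ω * (e t j ω * e s j ω)) := by
    intro t s ω; rw [pow_two, Finset.sum_mul_sum]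
  have hint2' : ∀ t s : ℤ,
      Integrable (fun ω => (∑ i : Fin m, e t i ω * e s i ω) ^ 2) μ := by
    intro t s
    have h : (fun ω => (∑ i : Fin m, e t i ω * e s i ω) ^ 2)
        = fun ω => ∑ i : Fin m, ∑ j : Fin m, (e t i ω * e s i ω * (e t j ω * e s j ω)) :=
      funext (hexpand t s)
    rw [h]
    exact integrable_finset_sum _ fun i _ => integrable_finset_sum _ fun j _ => hint4 t s i j
  -- key second-moment bound
  have key : ∀ t s : ℤ, (∫ ω, (∑ i : Fin m, e t i ω * e s i ω) ^ 2 ∂μ)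
      ≤ (m : ℝ) * B + γ (s - t) ^ 2 := by
    intro t s
    have h1 : (∫ ω, (∑ i : Fin m, e t i ω * e s i ω) ^ 2 ∂μ)
        = ∑ i : Fin m, ∑ j : Fin m, ∫ ω, e t i ω * e s i ω * (e t j ω * e s j ω) ∂μ := by
      simp_rw [hexpand t s]
      rw [integral_finset_sum _ fun i _ =>
        integrable_finset_sum _ fun j _ => hint4 t s i j]
      exact Finset.sum_congr rfl fun i _ => integral_finset_sum _ fun j _ => hint4 t s i j
    have h2 : ∀ i j : Fin m, (∫ ω, e t i ω * e s i ω * (e t j ω * e s j ω) ∂μ)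
        = cov μ (fun ω => e t i ω * e s i ω) (fun ω => e t j ω * e s j ω)
          + (∫ ω, e t i ω * e s i ω ∂μ) * (∫ ω, e t j ω * e s j ω ∂μ) := by
      intro i j; simp [cov]
    have h3 : (∑ i : Fin m, ∫ ω, e t i ω * e s i ω ∂μ) = γ (s - t) := by
      rw [← integral_finset_sum _ fun i _ => hint2 t s i]
      have h := hstat t (s - t)
      rw [show t + (s - t) = s from by ring] at h
      exact h
    have h4 : ∑ i : Fin m, ∑ j : Fin m,
        cov μ (fun ω => e t i ω * e s i ω) (fun ω => e t j ω * e s j ω) ≤ (m : ℝ) * B := by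
      have hle : ∑ i : Fin m, ∑ j : Fin m,
          cov μ (fun ω => e t i ω * e s i ω) (fun ω => e t j ω * e s j ω)
          ≤ ∑ i : Fin m, ∑ j : Fin m,
            |cov μ (fun ω => e t i ω * e s i ω) (fun ω => e t j ω * e s j ω)| :=
        Finset.sum_le_sum fun i _ => Finset.sum_le_sum fun j _ => le_abs_self _
      refine hle.trans ?_
      have h := hB t s
      have := mul_le_mul_of_nonneg_left h (le_of_lt hm')
      rw [← mul_assoc, mul_one_div, div_self (ne_of_gt hm'), one_mul] at this
      exact this
    calc (∫ ω, (∑ i : Fin m, e t i ω * e s i ω) ^ 2 ∂μ)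
        = (∑ i : Fin m, ∑ j : Fin m,
            cov μ (fun ω => e t i ω * e s i ω) (fun ω => e t j ω * e s j ω))
          + γ (s - t) ^ 2 := by
          rw [h1]
          simp_rw [h2, Finset.sum_add_distrib]
          rw [← Finset.sum_mul_sum, h3, ← pow_two]
      _ ≤ (m : ℝ) * B + γ (s - t) ^ 2 := by
          exact add_le_add_left h4 _
  -- summability of γ²
  have hγsq : ∀ u : ℤ, γ u ^ 2 = (m:ℝ)^2 * (γ u / m) ^ 2 := by
    intro u; field_simp
  have hγsum : Summable (fun u : ℤ => γ u ^ 2) := by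
    have h := hsum.mul_left ((m:ℝ)^2)
    refine h.congr fun u => ?_
    rw [hγsq u]
  have hγts : (∑' u : ℤ, γ u ^ 2) ≤ (m:ℝ)^2 * S := by
    calc (∑' u : ℤ, γ u ^ 2) = (m:ℝ)^2 * ∑' u : ℤ, (γ u / m) ^ 2 := by
          rw [← tsum_mul_left]
          exact tsum_congr hγsq
      _ ≤ (m:ℝ)^2 * S := mul_le_mul_of_nonneg_left hS (by positivity)
  -- row sums of γ² over Fin T
  have hrow : ∀ t : Fin T, (∑ s : Fin T, γ (((s:ℕ):ℤ) - ((t:ℕ):ℤ)) ^ 2) ≤ (m:ℝ)^2 * S := by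
    intro t
    have hinj : ∀ a ∈ (Finset.univ : Finset (Fin T)), ∀ b ∈ (Finset.univ : Finset (Fin T)),
        ((a:ℕ):ℤ) - ((t:ℕ):ℤ) = ((b:ℕ):ℤ) - ((t:ℕ):ℤ) → a = b := by
      intro a _ b _ hab
      simp only [sub_left_inj, Int.natCast_inj] at hab
      exact Fin.ext hab
    rw [← Finset.sum_image (f := fun u : ℤ => γ u ^ 2) (g := fun s : Fin T => ((s:ℕ):ℤ) - ((t:ℕ):ℤ)) hinj]
    refine le_trans (Summable.sum_le_tsum _ (fun u _ => sq_nonneg _) hγsum) hγts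
  -- the integrand G
  set G : Ω → ℝ := fun ω => ∑ t : Fin T, ∑ s : Fin T,
    (∑ i : Fin m, e (((t:ℕ):ℤ) + 1) i ω * e (((s:ℕ):ℤ) + 1) i ω) ^ 2 with hGdef
  have hGint : Integrable G μ :=
    integrable_finset_sum _ fun t _ => integrable_finset_sum _ fun s _ => hint2' _ _
  have hGle : (∫ ω, G ω ∂μ) ≤ (T:ℝ)^2 * ((m:ℝ) * B) + (T:ℝ) * ((m:ℝ)^2 * S) := by
    have h1 : (∫ ω, G ω ∂μ) = ∑ t : Fin T, ∑ s : Fin T,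
        ∫ ω, (∑ i : Fin m, e (((t:ℕ):ℤ) + 1) i ω * e (((s:ℕ):ℤ) + 1) i ω) ^ 2 ∂μ := by
      rw [hGdef]
      rw [integral_finset_sum _ fun t _ => integrable_finset_sum _ fun s _ => hint2' _ _]
      exact Finset.sum_congr rfl fun t _ => integral_finset_sum _ fun s _ => hint2' _ _
    rw [h1]
    have h2 : ∀ t s : Fin T,
        (∫ ω, (∑ i : Fin m, e (((t:ℕ):ℤ) + 1) i ω * e (((s:ℕ):ℤ) + 1) i ω) ^ 2 ∂μ)
          ≤ (m:ℝ) * B + γ (((s:ℕ):ℤ) - ((t:ℕ):ℤ)) ^ 2 := by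
      intro t s
      have h := key (((t:ℕ):ℤ) + 1) (((s:ℕ):ℤ) + 1)
      rw [show ((((s:ℕ):ℤ) + 1) - (((t:ℕ):ℤ) + 1)) = ((s:ℕ):ℤ) - ((t:ℕ):ℤ) from by ring] at h
      exact h
    calc (∑ t : Fin T, ∑ s : Fin T,
          ∫ ω, (∑ i : Fin m, e (((t:ℕ):ℤ) + 1) i ω * e (((s:ℕ):ℤ) + 1) i ω) ^ 2 ∂μ)
        ≤ ∑ t : Fin T, ∑ s : Fin T, ((m:ℝ) * B + γ (((s:ℕ):ℤ) - ((t:ℕ):ℤ)) ^ 2) :=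
          Finset.sum_le_sum fun t _ => Finset.sum_le_sum fun s _ => h2 t s
      _ = (T:ℝ)^2 * ((m:ℝ) * B)
          + ∑ t : Fin T, ∑ s : Fin T, γ (((s:ℕ):ℤ) - ((t:ℕ):ℤ)) ^ 2 := by
          simp_rw [Finset.sum_add_distrib]
          simp only [Finset.sum_const, Finset.card_univ, Fintype.card_fin, nsmul_eq_mul]
          ring
      _ ≤ (T:ℝ)^2 * ((m:ℝ) * B) + (T:ℝ) * ((m:ℝ)^2 * S) := by
          refine add_le_add_right ?_ _
          calc (∑ t : Fin T, ∑ s : Fin T, γ (((s:ℕ):ℤ) - ((t:ℕ):ℤ)) ^ 2)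
              ≤ ∑ _t : Fin T, (m:ℝ)^2 * S := Finset.sum_le_sum fun t _ => hrow t
            _ = (T:ℝ) * ((m:ℝ)^2 * S) := by
                simp only [Finset.sum_const, Finset.card_univ, Fintype.card_fin, nsmul_eq_mul]
  -- pointwise domination of specNorm⁴ and the rescaled integrand
  have hTm0 : (0:ℝ) < (T:ℝ) * m := mul_pos hT' hm'
  have hsqrt4 : Real.sqrt ((T:ℝ) * m) ^ 4 = ((T:ℝ) * m) ^ 2 := by
    have : Real.sqrt ((T:ℝ) * m) ^ 4 = (Real.sqrt ((T:ℝ) * m) ^ 2) ^ 2 := by ring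
    rw [this, Real.sq_sqrt hTm0.le]
  have hpt : ∀ ω : Ω,
      (specNorm (Matrix.of fun (t : Fin T) (j : Fin m) => e ((t : ℕ) + 1) j ω) /
        Real.sqrt ((T : ℝ) * m)) ^ 4
      = specNorm (Matrix.of fun (t : Fin T) (j : Fin m) => e ((t : ℕ) + 1) j ω) ^ 4
          / ((T:ℝ) * m) ^ 2 := by
    intro ω; rw [div_pow, hsqrt4]
  have hspecG : ∀ ω : Ω,
      specNorm (Matrix.of fun (t : Fin T) (j : Fin m) => e ((t : ℕ) + 1) j ω) ^ 4 ≤ G ω :=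
    fun ω => specNorm_pow_four_le _
  -- first conclusion
  have hmain : (∫ ω, (specNorm (Matrix.of fun (t : Fin T) (j : Fin m) => e ((t : ℕ) + 1) j ω) /
        Real.sqrt ((T : ℝ) * m)) ^ 4 ∂μ) ≤ (S + B) / (min (T : ℝ) m) := by
    have heq : (fun ω => (specNorm
          (Matrix.of fun (t : Fin T) (j : Fin m) => e ((t : ℕ) + 1) j ω) /
          Real.sqrt ((T : ℝ) * m)) ^ 4)
        = fun ω => specNorm
            (Matrix.of fun (t : Fin T) (j : Fin m) => e ((t : ℕ) + 1) j ω) ^ 4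
            / ((T:ℝ) * m) ^ 2 := funext hpt
    rw [heq, integral_div]
    have hle1 : (∫ ω, specNorm
        (Matrix.of fun (t : Fin T) (j : Fin m) => e ((t : ℕ) + 1) j ω) ^ 4 ∂μ)
        ≤ ∫ ω, G ω ∂μ := by
      refine integral_mono_of_nonneg (ae_of_all μ fun ω => by positivity) hGint
        (ae_of_all μ hspecG)
    have step : (∫ ω, specNorm
        (Matrix.of fun (t : Fin T) (j : Fin m) => e ((t : ℕ) + 1) j ω) ^ 4 ∂μ)
          / ((T:ℝ) * m) ^ 2
        ≤ ((T:ℝ)^2 * ((m:ℝ) * B) + (T:ℝ) * ((m:ℝ)^2 * S)) / ((T:ℝ) * m) ^ 2 :=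
      div_le_div_of_nonneg_right (hle1.trans hGle) (by positivity) |>.trans_eq rfl
    refine step.trans ?_
    have harith : ((T:ℝ)^2 * ((m:ℝ) * B) + (T:ℝ) * ((m:ℝ)^2 * S)) / ((T:ℝ) * m) ^ 2
        = B / m + S / T := by
      field_simp
    rw [harith]
    have h1 : B / (m:ℝ) ≤ B / min (T:ℝ) m :=
      div_le_div_of_nonneg_left hB0 hmin (min_le_right _ _)
    have h2 : S / (T:ℝ) ≤ S / min (T:ℝ) m :=
      div_le_div_of_nonneg_left hS0 hmin (min_le_left _ _)
    calc B / (m:ℝ) + S / (T:ℝ) ≤ B / min (T:ℝ) m + S / min (T:ℝ) m := add_le_add h1 h2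
      _ = (S + B) / min (T:ℝ) m := by rw [← add_div, add_comm]
  refine ⟨hmain, ?_⟩
  -- Markov part
  intro ε hε
  have hXmeas : Measurable (fun ω =>
      specNorm (Matrix.of fun (t : Fin T) (j : Fin m) => e ((t : ℕ) + 1) j ω)) := by
    have hm1 : Measurable (fun ω => (fun (t : Fin T) (j : Fin m) => e ((t : ℕ) + 1) j ω)) :=
      measurable_pi_lambda _ fun t => measurable_pi_lambda _ fun j => hmeas _ j
    exact specNorm_continuous.measurable.comp hm1
  have hX4meas : Measurable (fun ω =>
      (specNorm (Matrix.of fun (t : Fin T) (j : Fin m) => e ((t : ℕ) + 1) j ω) /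
        Real.sqrt ((T : ℝ) * m)) ^ 4) :=
    ((hXmeas.div_const _).pow_const 4)
  have hX4int : Integrable (fun ω =>
      (specNorm (Matrix.of fun (t : Fin T) (j : Fin m) => e ((t : ℕ) + 1) j ω) /
        Real.sqrt ((T : ℝ) * m)) ^ 4) μ := by
    refine Integrable.mono' (hGint.div_const (((T:ℝ) * m) ^ 2))
      hX4meas.aestronglyMeasurable (ae_of_all μ fun ω => ?_)
    rw [Real.norm_eq_abs, abs_of_nonneg (by positivity), hpt ω]
    exact div_le_div_of_nonneg_right (hspecG ω) (by positivity)
  set c : ℝ := ε / (min (T:ℝ) m) ^ ((1:ℝ)/4) with hc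
  have hcpos : 0 < c := div_pos hε (Real.rpow_pos_of_pos hmin _)
  have hc4 : c ^ 4 = ε ^ 4 / min (T:ℝ) m := by
    rw [hc, div_pow]
    congr 1
    rw [← Real.rpow_natCast ((min (T:ℝ) m) ^ ((1:ℝ)/4)) 4, ← Real.rpow_mul hmin.le]
    norm_num
  have hsub : {ω | c ≤ specNorm
        (Matrix.of fun (t : Fin T) (j : Fin m) => e ((t : ℕ) + 1) j ω) /
        Real.sqrt ((T : ℝ) * m)}
      ⊆ {ω | c ^ 4 ≤ (specNorm
        (Matrix.of fun (t : Fin T) (j : Fin m) => e ((t : ℕ) + 1) j ω) /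
        Real.sqrt ((T : ℝ) * m)) ^ 4} :=
    fun ω h => pow_le_pow_left₀ hcpos.le h 4
  have hmark := mul_meas_ge_le_integral_of_nonneg
    (ae_of_all μ fun ω => by positivity : 0 ≤ᵐ[μ] fun ω =>
      (specNorm (Matrix.of fun (t : Fin T) (j : Fin m) => e ((t : ℕ) + 1) j ω) /
        Real.sqrt ((T : ℝ) * m)) ^ 4)
    hX4int (c ^ 4)
  set Aset := {ω | c ^ 4 ≤ (specNorm
      (Matrix.of fun (t : Fin T) (j : Fin m) => e ((t : ℕ) + 1) j ω) /
      Real.sqrt ((T : ℝ) * m)) ^ 4} with hAset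
  have hc4pos : 0 < c ^ 4 := by positivity
  have htoReal : (μ Aset).toReal ≤ (S + B) / ε ^ 4 := by
    have h := hmark.trans hmain
    rw [hc4] at h
    have h' : (μ Aset).toReal ≤ ((S + B) / min (T:ℝ) m) / (ε ^ 4 / min (T:ℝ) m) := by
      rw [le_div_iff₀ (by positivity)]
      rw [measureReal_def] at h
      linarith [h]
    refine h'.trans_eq ?_
    have hmin0 : (min (T:ℝ) m) ≠ 0 := ne_of_gt hmin
    have hε0 : ε ^ 4 ≠ 0 := by positivity
    field_simp
  calc μ {ω | c ≤ specNorm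
        (Matrix.of fun (t : Fin T) (j : Fin m) => e ((t : ℕ) + 1) j ω) /
        Real.sqrt ((T : ℝ) * m)} ≤ μ Aset := measure_mono hsub
    _ = ENNReal.ofReal ((μ Aset).toReal) := (ENNReal.ofReal_toReal (measure_ne_top μ _)).symm
    _ ≤ ENNReal.ofReal ((S + B) / ε ^ 4) := ENNReal.ofReal_le_ofReal htoReal
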